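/- For all real numbers M and N with N ≠ 0, the determinant of the symmetric 4×4 matrix G(M,N) defined below equals (1/4)·(M−1)²·(M+2)²·(N−3)·(N−2)²·(N+1)²·(N+4)²·(N+6). -/

import Mathlib

/-- The metric `G(M,N)` on the space of the four quartic couplings. -/
noncomputable def Gmat (M N : ℝ) : Matrix (Fin 4) (Fin 4) ℝ :=
  let G11 := (M*N^4 + 3*M*N^3 + 2*N^3 - 2*M*N^2 - 4*N^2 - 12*M*N - 24*N + 24*M + 48) / (2*N^2)
  let G12 := (N^4 + M*N^3 + 4*N^3 - 2*M*N^2 - 4*N^2 - 12*M*N - 24*N + 24*M + 48) / (2*N^2)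
  let G13 := 2 * (M*N^2 + N^2 + M*N + 2*N - 2*M - 4) / N
  let G14 := 2 * (2*N^2 + M*N + 2*N - 2*M - 4) / N
  let G22 := (M*N^4 + N^4 + 4*M*N^3 + 6*N^3 - 4*M*N^2 - 8*N^2 - 24*M*N - 48*N + 48*M + 96) / (4*N^2)
  let G23 := (M*N^2 + 3*N^2 + 2*M*N + 4*N - 4*M - 8) / N
  let G24 := 2 * (M*N^2 + N^2 + M*N + 2*N - 2*M - 4) / N
  let G33 := (M*N^3 + N^3 + M*N^2 + N^2 + 4*N) / N
  let G34 := 2 * (N^2 + N + 2*M)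
  let G44 := 2 * (4 - 2*M + M*N + M*N^2)
  !![G11, G12, G13, G14;
     G12, G22, G23, G24;
     G13, G23, G33, G34;
     G14, G24, G34, G44]


lemma det_fin_four' (a b c d e f g h i j k l m n o p : ℝ) :
    Matrix.det !![a,b,c,d;e,f,g,h;i,j,k,l;m,n,o,p] =
      a*(f*(k*p-l*o) - g*(j*p-l*n) + h*(j*o-k*n))
      - b*(e*(k*p-l*o) - g*(i*p-l*m) + h*(i*o-k*m))
      + c*(e*(j*p-l*n) - f*(i*p-l*m) + h*(i*n-j*m))
      - d*(e*(j*o-k*n) - f*(i*o-k*m) + g*(i*n-j*m)) := by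
  rw [Matrix.det_succ_row_zero]
  simp [Fin.sum_univ_succ, Matrix.det_fin_three, Fin.succAbove]
  ring

set_option maxHeartbeats 4000000 in
/-- The determinant of the metric `G(M,N)` equals
`(1/4)(M−1)²(M+2)²(N−3)(N−2)²(N+1)²(N+4)²(N+6)`. -/
theorem stmt10 (M N : ℝ) (hN : N ≠ 0) :
    (Gmat M N).det =
      (1/4) * (M - 1)^2 * (M + 2)^2 * (N - 3) * (N - 2)^2 * (N + 1)^2
        * (N + 4)^2 * (N + 6) := by
  have hc : (4*N^2 : ℝ) ≠ 0 := by positivity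
  have hB : (4*N^2 : ℝ) • Gmat M N =
      !![2*(M*N^4 + 3*M*N^3 + 2*N^3 - 2*M*N^2 - 4*N^2 - 12*M*N - 24*N + 24*M + 48),
         2*(N^4 + M*N^3 + 4*N^3 - 2*M*N^2 - 4*N^2 - 12*M*N - 24*N + 24*M + 48),
         8*N*(M*N^2 + N^2 + M*N + 2*N - 2*M - 4),
         8*N*(2*N^2 + M*N + 2*N - 2*M - 4);
         2*(N^4 + M*N^3 + 4*N^3 - 2*M*N^2 - 4*N^2 - 12*M*N - 24*N + 24*M + 48),
         M*N^4 + N^4 + 4*M*N^3 + 6*N^3 - 4*M*N^2 - 8*N^2 - 24*M*N - 48*N + 48*M + 96,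
         4*N*(M*N^2 + 3*N^2 + 2*M*N + 4*N - 4*M - 8),
         8*N*(M*N^2 + N^2 + M*N + 2*N - 2*M - 4);
         8*N*(M*N^2 + N^2 + M*N + 2*N - 2*M - 4),
         4*N*(M*N^2 + 3*N^2 + 2*M*N + 4*N - 4*M - 8),
         4*N*(M*N^3 + N^3 + M*N^2 + N^2 + 4*N),
         8*N^2*(N^2 + N + 2*M);
         8*N*(2*N^2 + M*N + 2*N - 2*M - 4),
         8*N*(M*N^2 + N^2 + M*N + 2*N - 2*M - 4),
         8*N^2*(N^2 + N + 2*M),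
         8*N^2*(4 - 2*M + M*N + M*N^2)] := by
    ext i j
    fin_cases i <;> fin_cases j <;>
      · simp only [Gmat, Matrix.smul_apply, Matrix.cons_val', Matrix.cons_val_zero,
          Matrix.cons_val_one, Matrix.head_cons, Matrix.empty_val', Matrix.cons_val_fin_one,
          Matrix.head_fin_const, Matrix.cons_val_two, Matrix.tail_cons, Matrix.cons_val_three,
          smul_eq_mul, Matrix.of_apply, Fin.isValue, Fin.zero_eta, Fin.mk_one, Fin.reduceFinMk]
        field_simp
        try ring
  have h1 : ((4*N^2 : ℝ) • Gmat M N).det = (4*N^2)^4 * (Gmat M N).det := by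
    rw [Matrix.det_smul]
    norm_num
  rw [hB] at h1
  have h2 : ((4*N^2)^4 : ℝ) * ((1/4) * (M - 1)^2 * (M + 2)^2 * (N - 3) * (N - 2)^2 * (N + 1)^2
        * (N + 4)^2 * (N + 6)) = (4*N^2)^4 * (Gmat M N).det := by
    rw [← h1, det_fin_four']
    ring
  have := mul_left_cancel₀ (pow_ne_zero 4 hc) h2
  linarith [this]
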